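/- arXiv:2409.18079 — 2 statements merged into one kernel-verified Lean document; each statement's English description precedes it below -/
import Mathlib

section
/- Let μ be a planar quasi-homogeneous polynomial of type t̂ and degree k and h* a quasi-homogeneous polynomial of type t̂ and degree l + |t̂|. Then μ·X_{h*} = X_{g} + ν·D₀, where g = ((l+|t̂|)/(k+l+|t̂|))·μ·h* and ν = (1/(k+l+|t̂|))·∇μ·X_{h*}, with D₀ = (t₁x, t₂y). -/
open MvPolynomial

def IsQH (t : Fin 2 → ℕ) (k : ℕ) (f : MvPolynomial (Fin 2) ℝ) : Prop :=
  ∀ (ε : ℝ) (x : Fin 2 → ℝ),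
    eval (fun i => ε ^ t i * x i) f = ε ^ k * eval x f

noncomputable def ham (h : MvPolynomial (Fin 2) ℝ) : Fin 2 → MvPolynomial (Fin 2) ℝ :=
  ![-(pderiv 1 h), pderiv 0 h]

noncomputable def D0 (t : Fin 2 → ℕ) : Fin 2 → MvPolynomial (Fin 2) ℝ :=
  ![C ((t 0 : ℝ)) * X 0, C ((t 1 : ℝ)) * X 1]

lemma euler_aux (t : Fin 2 → ℕ) (x : Fin 2 → ℝ) (g : MvPolynomial (Fin 2) ℝ) :
    HasDerivAt (fun ε : ℝ => eval (fun i => ε ^ t i * x i) g)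
      (eval x (C ((t 0:ℝ)) * X 0 * pderiv 0 g + C ((t 1:ℝ)) * X 1 * pderiv 1 g)) 1 := by
  induction g using MvPolynomial.induction_on with
  | C a => simp; exact hasDerivAt_const 1 a
  | add p q hp hq =>
      have := hp.add hq
      convert this using 1
      all_goals try rfl
      · funext ε; simp
      · simp [map_add]; ring
  | mul_X p i hp =>
      have hxi : HasDerivAt (fun ε : ℝ => ε ^ t i * x i) ((t i : ℝ) * x i) 1 := by
        simpa using (hasDerivAt_pow (t i) 1).mul_const (x i)
      have := hp.mul hxi
      simp only [eval_mul] at this ⊢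
      convert this using 1
      all_goals try rfl
      · funext ε; simp
      · fin_cases i <;>
          simp [pderiv_mul, pderiv_X, Pi.single_apply] <;> ring

lemma euler (t : Fin 2 → ℕ) (k : ℕ) (f : MvPolynomial (Fin 2) ℝ) (hf : IsQH t k f) :
    C ((t 0:ℝ)) * X 0 * pderiv 0 f + C ((t 1:ℝ)) * X 1 * pderiv 1 f = C ((k:ℝ)) * f := by
  apply MvPolynomial.funext
  intro x
  have h2 := euler_aux t x f
  have heq : (fun ε : ℝ => eval (fun i => ε ^ t i * x i) f) = fun ε => ε ^ k * eval x f := by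
    funext ε; exact hf ε x
  rw [heq] at h2
  have h1 : HasDerivAt (fun ε : ℝ => ε ^ k * eval x f) ((k:ℝ) * eval x f) 1 := by
    simpa using (hasDerivAt_pow k 1).mul_const (eval x f)
  have := h2.unique h1
  simpa using this

/-- `μ·X_{h*} = X_g + ν·D₀` with `g = ((l+|t̂|)/(k+l+|t̂|))·μ·h*` and
`ν = (1/(k+l+|t̂|))·∇μ·X_{h*}`. -/
theorem smul_ham_splitting (t : Fin 2 → ℕ) (ht : ∀ i, 0 < t i) (k l : ℕ)
    (μ hstar : MvPolynomial (Fin 2) ℝ)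
    (hμ : IsQH t k μ) (hhs : IsQH t (l + t 0 + t 1) hstar) :
    ∀ j, μ * ham hstar j =
      ham (C (((l + t 0 + t 1 : ℕ) : ℝ) / ((k + l + t 0 + t 1 : ℕ) : ℝ)) * (μ * hstar)) j
      + (C (((k + l + t 0 + t 1 : ℕ) : ℝ))⁻¹ * ∑ i, pderiv i μ * ham hstar i) * D0 t j := by
  have e1 := euler t k μ hμ
  have e2 := euler t (l + t 0 + t 1) hstar hhs
  set n : ℝ := ((k + l + t 0 + t 1 : ℕ) : ℝ) with hn_def
  have hn : n ≠ 0 := by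
    have := ht 0
    positivity
  have hC : (C (n⁻¹) : MvPolynomial (Fin 2) ℝ) * C n = 1 := by
    rw [← C_mul, inv_mul_cancel₀ hn, C_1]
  have hdiv : (C (((l + t 0 + t 1 : ℕ) : ℝ) / n) : MvPolynomial (Fin 2) ℝ)
      = C (n⁻¹) * C (((l + t 0 + t 1 : ℕ) : ℝ)) := by
    rw [← C_mul]; congr 1; field_simp
  have hNKS : (C n : MvPolynomial (Fin 2) ℝ)
      = C ((k:ℝ)) + C (((l + t 0 + t 1 : ℕ) : ℝ)) := by
    rw [← C_add, hn_def]; congr 1; push_cast; ring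
  intro j
  fin_cases j <;>
    simp only [ham, D0, Fin.mk_zero, Fin.mk_one, Fin.isValue, Matrix.cons_val_zero,
      Matrix.cons_val_one, Matrix.head_cons, Fin.sum_univ_two, pderiv_mul, pderiv_C,
      map_mul, map_neg, mul_neg, neg_mul, hdiv, zero_mul, mul_zero, add_zero, zero_add]
  · linear_combination (μ * pderiv 1 hstar) * hC + (C (n⁻¹) * pderiv 1 hstar) * e1
      - (C (n⁻¹) * pderiv 1 μ) * e2 - (C (n⁻¹) * μ * pderiv 1 hstar) * hNKS
  · linear_combination (-(μ * pderiv 0 hstar)) * hC - (C (n⁻¹) * pderiv 0 hstar) * e1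
      + (C (n⁻¹) * pderiv 0 μ) * e2 + (C (n⁻¹) * μ * pderiv 0 hstar) * hNKS
end

section
/- Let 𝔥 be a nonzero planar quasi-homogeneous polynomial of type t̂ and degree r+|t̂|, and let Δ̂_{k+|t̂|} be a fixed complement of 𝔥·𝒫^{t̂}_{k−r} in 𝒫^{t̂}_{k+|t̂|}. Then every planar quasi-homogeneous vector field P of type t̂ and degree k decomposes uniquely as P = X_g + μ·D₀ + λ·X_𝔥 with g ∈ Δ̂_{k+|t̂|}, μ ∈ 𝒫^{t̂}_k, λ ∈ 𝒫^{t̂}_{k−r}; i.e. 𝒬^{t̂}_k = Ĉ_k ⊕ D̂_k ⊕ F̂_k, where Ĉ_k = {X_g : g ∈ Δ̂_{k+|t̂|}}, D̂_k = {μD₀ : μ ∈ 𝒫^{t̂}_k}, F̂_k = {λX_𝔥 : λ ∈ 𝒫^{t̂}_{k−r}}. -/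
open MvPolynomial

def IsQHVF (t : Fin 2 → ℕ) (k : ℕ) (F : Fin 2 → MvPolynomial (Fin 2) ℝ) : Prop :=
  ∀ j, IsQH t (k + t j) (F j)

section Lemmas

variable {t : Fin 2 → ℕ} {m n : ℕ} {p q : MvPolynomial (Fin 2) ℝ}

lemma weight_two (t : Fin 2 → ℕ) (d : Fin 2 →₀ ℕ) :
    (Finsupp.weight t) d = d 0 * t 0 + d 1 * t 1 := by
  rw [Finsupp.weight_apply, Finsupp.sum_fintype, Fin.sum_univ_two]
  · simp [mul_comm]
  · intro i; exact zero_smul ℕ _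

lemma weight_single (t : Fin 2 → ℕ) (j : Fin 2) :
    (Finsupp.weight t) (Finsupp.single j 1) = t j := by
  fin_cases j <;> simp [weight_two]

lemma qh_of_wh (hp : IsWeightedHomogeneous t p m) : IsQH t m p := by
  intro ε x
  rw [eval_eq', eval_eq', Finset.mul_sum]
  refine Finset.sum_congr rfl fun d hd => ?_
  have hw := hp (mem_support_iff.mp hd)
  rw [weight_two] at hw
  have hε : ε ^ m = ε ^ (d 0 * t 0) * ε ^ (d 1 * t 1) := by rw [← pow_add, hw]
  rw [Fin.prod_univ_two, Fin.prod_univ_two, hε, mul_pow, mul_pow,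
    pow_mul' ε (d 0) (t 0), pow_mul' ε (d 1) (t 1)]
  ring

lemma wh_of_qh (hp : IsQH t m p) : IsWeightedHomogeneous t p m := by
  classical
  have hfin := weightedHomogeneousComponent_finsupp (w := t) (φ := p)
  set S : Finset ℕ := hfin.toFinset with hS
  have hsum : ∑ i ∈ S, weightedHomogeneousComponent t i p = p := by
    rw [← finsum_eq_sum _ hfin, sum_weightedHomogeneousComponent]
  have hzero : ∀ i, i ≠ m → weightedHomogeneousComponent t i p = 0 := by
    intro i him
    by_cases hiS : i ∈ S
    · apply MvPolynomial.funext
      intro x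
      rw [map_zero]
      set F : Polynomial ℝ :=
        ∑ j ∈ S, Polynomial.C (eval x (weightedHomogeneousComponent t j p)) * Polynomial.X ^ j
        with hF
      have hFG : F = Polynomial.C (eval x p) * Polynomial.X ^ m := by
        apply Polynomial.funext
        intro ε
        rw [hF, Polynomial.eval_finset_sum]
        simp only [Polynomial.eval_mul, Polynomial.eval_C, Polynomial.eval_pow,
          Polynomial.eval_X]
        have : ∀ j ∈ S, eval x (weightedHomogeneousComponent t j p) * ε ^ j
            = eval (fun i => ε ^ t i * x i) (weightedHomogeneousComponent t j p) := by
          intro j _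
          rw [qh_of_wh (weightedHomogeneousComponent_isWeightedHomogeneous j p) ε x]
          ring
        rw [Finset.sum_congr rfl this, ← map_sum, hsum, hp ε x]
        ring
      have := congrArg (fun q => Polynomial.coeff q i) hFG
      simpa [hF, Polynomial.coeff_X_pow, Polynomial.finset_sum_coeff,
        Finset.sum_ite_eq' S i, hiS, him] using this
    · by_contra hne0
      exact hiS ((Set.Finite.mem_toFinset hfin).mpr hne0)
  intro d hd
  by_contra hne
  apply hd
  have := hzero (Finsupp.weight t d) hne
  have hc := coeff_weightedHomogeneousComponent (w := t) (n := Finsupp.weight t d) (φ := p) d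
  rw [if_pos rfl, this, coeff_zero] at hc
  exact hc.symm

lemma wh_neg (hp : IsWeightedHomogeneous t p m) : IsWeightedHomogeneous t (-p) m := by
  intro d hd
  exact hp (by simpa [coeff_neg] using hd)

lemma wh_sub (hp : IsWeightedHomogeneous t p m) (hq : IsWeightedHomogeneous t q m) :
    IsWeightedHomogeneous t (p - q) m := by
  rw [sub_eq_add_neg]; exact hp.add (wh_neg hq)

lemma wh_congr (hp : IsWeightedHomogeneous t p m) (h : m = n) :
    IsWeightedHomogeneous t p n := h ▸ hp

lemma single_add_sub {v : Fin 2 →₀ ℕ} {j : Fin 2} (hvj : v j ≠ 0) :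
    Finsupp.single j 1 + (v - Finsupp.single j 1) = v := by
  ext i
  rcases eq_or_ne i j with rfl | hij
  · simp only [Finsupp.add_apply, Finsupp.tsub_apply, Finsupp.single_eq_same]
    omega
  · simp [Finsupp.single_apply, (Ne.symm hij), Finsupp.tsub_apply]

lemma weight_sub_single {v : Fin 2 →₀ ℕ} {j : Fin 2} (hvj : v j ≠ 0) :
    (Finsupp.weight t) (v - Finsupp.single j 1) + t j = (Finsupp.weight t) v := by
  conv_rhs => rw [← single_add_sub hvj]
  rw [map_add, weight_single]
  ring

lemma wh_pderiv (j : Fin 2) (hp : IsWeightedHomogeneous t p (n + t j)) :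
    IsWeightedHomogeneous t (pderiv j p) n := by
  have hrw : pderiv j p
      = ∑ v ∈ p.support, monomial (v - Finsupp.single j 1) (coeff v p * (v j : ℝ)) := by
    conv_lhs => rw [as_sum p]
    rw [map_sum]
    exact Finset.sum_congr rfl fun v _ => pderiv_monomial
  rw [hrw]
  apply IsWeightedHomogeneous.sum
  intro v hv
  by_cases hvj : v j = 0
  · simp only [hvj, Nat.cast_zero, mul_zero, map_zero]
    exact isWeightedHomogeneous_zero _ _ _
  · apply isWeightedHomogeneous_monomial
    have hw : (Finsupp.weight t) v = n + t j := hp (mem_support_iff.mp hv)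
    have := weight_sub_single (t := t) hvj
    omega

lemma euler_s11 (hp : IsWeightedHomogeneous t p m) :
    C (t 0 : ℝ) * X 0 * pderiv 0 p + C (t 1 : ℝ) * X 1 * pderiv 1 p = C (m : ℝ) * p := by
  have key : ∀ i : Fin 2, C (t i : ℝ) * X i * pderiv i p
      = ∑ v ∈ p.support, monomial v (((t i * v i : ℕ) : ℝ) * coeff v p) := by
    intro i
    conv_lhs => rw [as_sum p]
    rw [map_sum, Finset.mul_sum]
    refine Finset.sum_congr rfl fun v _ => ?_
    rw [pderiv_monomial]
    by_cases hvi : v i = 0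
    · simp [hvi]
    · have hX : (X i : MvPolynomial (Fin 2) ℝ) = monomial (Finsupp.single i 1) 1 := rfl
      rw [mul_assoc, hX, monomial_mul, one_mul, single_add_sub hvi, C_mul_monomial]
      congr 1
      push_cast
      ring
  rw [key 0, key 1, ← Finset.sum_add_distrib]
  conv_rhs => rw [as_sum p]
  rw [Finset.mul_sum]
  refine Finset.sum_congr rfl fun v hv => ?_
  rw [← map_add, C_mul_monomial]
  congr 1
  have hw : (Finsupp.weight t) v = m := hp (mem_support_iff.mp hv)
  rw [weight_two] at hw
  push_cast [← hw]
  ring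

lemma qh_mul {a b : ℕ} {f g : MvPolynomial (Fin 2) ℝ} (hf : IsQH t a f) (hg : IsQH t b g) :
    IsQH t (a + b) (f * g) := by
  intro ε x
  rw [map_mul, map_mul, hf, hg, pow_add]
  ring

lemma qh_X (i : Fin 2) : IsQH t (t i) (X i) := by
  intro ε x
  simp

lemma qh_sub (hp : IsQH t m p) (hq : IsQH t m q) : IsQH t m (p - q) := by
  intro ε x
  rw [map_sub, map_sub, hp, hq]
  ring

lemma qh_Cmul (c : ℝ) (hp : IsQH t m p) : IsQH t m (C c * p) := by
  intro ε x
  rw [map_mul, map_mul, eval_C, eval_C, hp]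
  ring

lemma qh_zero : IsQH t m (0 : MvPolynomial (Fin 2) ℝ) := by
  intro ε x
  simp

lemma qh_congr (hp : IsQH t m p) (h : m = n) : IsQH t n p := h ▸ hp

lemma key0 (t : Fin 2 → ℕ) (k : ℕ) (V₀ V₁ : MvPolynomial (Fin 2) ℝ)
    (h0 : IsWeightedHomogeneous t V₀ (k + t 0)) :
    C ((k + t 0 + t 1 : ℕ) : ℝ) * V₀ =
      -(pderiv 1 (C (t 0 : ℝ) * X 0 * V₁ - C (t 1 : ℝ) * X 1 * V₀))
        + (pderiv 0 V₀ + pderiv 1 V₁) * (C (t 0 : ℝ) * X 0) := by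
  have e0 := euler_s11 h0
  have hc : ((k + t 0 + t 1 : ℕ) : ℝ) = ((k + t 0 : ℕ) : ℝ) + ((t 1 : ℕ) : ℝ) := by push_cast; ring
  rw [hc, map_add]
  simp only [map_sub, pderiv_mul, pderiv_X_self, pderiv_X_of_ne (show (0:Fin 2) ≠ 1 by decide),
    pderiv_X_of_ne (show (1:Fin 2) ≠ 0 by decide), pderiv_C, mul_one, mul_zero, zero_mul,
    zero_add, add_zero]
  linear_combination -e0

lemma key1 (t : Fin 2 → ℕ) (k : ℕ) (V₀ V₁ : MvPolynomial (Fin 2) ℝ)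
    (h1 : IsWeightedHomogeneous t V₁ (k + t 1)) :
    C ((k + t 0 + t 1 : ℕ) : ℝ) * V₁ =
      pderiv 0 (C (t 0 : ℝ) * X 0 * V₁ - C (t 1 : ℝ) * X 1 * V₀)
        + (pderiv 0 V₀ + pderiv 1 V₁) * (C (t 1 : ℝ) * X 1) := by
  have e1 := euler_s11 h1
  have hc : ((k + t 0 + t 1 : ℕ) : ℝ) = ((k + t 1 : ℕ) : ℝ) + ((t 0 : ℕ) : ℝ) := by push_cast; ring
  rw [hc, map_add]
  simp only [map_sub, pderiv_mul, pderiv_X_self, pderiv_X_of_ne (show (0:Fin 2) ≠ 1 by decide),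
    pderiv_X_of_ne (show (1:Fin 2) ≠ 0 by decide), pderiv_C, mul_one, mul_zero, zero_mul,
    zero_add, add_zero]
  linear_combination -e1

end Lemmas

/-- The planar splitting `𝒬^{t̂}_k = Ĉ_k ⊕ D̂_k ⊕ F̂_k`: every planar
quasi-homogeneous vector field `P` of degree `k` decomposes uniquely as
`P = X_g + μ·D₀ + λ·X_𝔥` with `g ∈ Δ̂`, `μ ∈ 𝒫^{t̂}_k`, `λ ∈ 𝒫^{t̂}_{k−r}`. -/
theorem planar_splitting (t : Fin 2 → ℕ) (ht : ∀ i, 0 < t i) (r k : ℕ) (hrk : r ≤ k)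
    (𝔥 : MvPolynomial (Fin 2) ℝ) (h𝔥 : IsQH t (r + t 0 + t 1) 𝔥) (h𝔥0 : 𝔥 ≠ 0)
    (Δ : Submodule ℝ (MvPolynomial (Fin 2) ℝ))
    (hΔQH : ∀ g ∈ Δ, IsQH t (k + t 0 + t 1) g)
    (hΔcompl : ∀ p : MvPolynomial (Fin 2) ℝ, IsQH t (k + t 0 + t 1) p →
      ∃! gl : MvPolynomial (Fin 2) ℝ × MvPolynomial (Fin 2) ℝ,
        gl.1 ∈ Δ ∧ IsQH t (k - r) gl.2 ∧ p = gl.1 + gl.2 * 𝔥)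
    (P : Fin 2 → MvPolynomial (Fin 2) ℝ) (hP : IsQHVF t k P) :
    ∃! c : MvPolynomial (Fin 2) ℝ × MvPolynomial (Fin 2) ℝ × MvPolynomial (Fin 2) ℝ,
      c.1 ∈ Δ ∧ IsQH t k c.2.1 ∧ IsQH t (k - r) c.2.2 ∧
        ∀ j, P j = ham c.1 j + c.2.1 * D0 t j + c.2.2 * ham 𝔥 j := by
  classical
  have hks : ((k + t 0 + t 1 : ℕ) : ℝ) ≠ 0 :=
    Nat.cast_ne_zero.mpr (by have := ht 0; omega)
  have hrs : ((r + t 0 + t 1 : ℕ) : ℝ) ≠ 0 :=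
    Nat.cast_ne_zero.mpr (by have := ht 0; omega)
  have c1 : (C ((k + t 0 + t 1 : ℕ) : ℝ) : MvPolynomial (Fin 2) ℝ)
      * C (((k + t 0 + t 1 : ℕ) : ℝ))⁻¹ = 1 := by
    rw [← C_mul, mul_inv_cancel₀ hks, C_1]
  have c2 : (C ((r + t 0 + t 1 : ℕ) : ℝ) : MvPolynomial (Fin 2) ℝ)
      * C (((r + t 0 + t 1 : ℕ) : ℝ))⁻¹ = 1 := by
    rw [← C_mul, mul_inv_cancel₀ hrs, C_1]
  have wh𝔥 : IsWeightedHomogeneous t 𝔥 (r + t 0 + t 1) := wh_of_qh h𝔥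
  have e_h := euler_s11 wh𝔥
  have hPwQH : IsQH t (k + t 0 + t 1)
      (C (t 0 : ℝ) * X 0 * P 1 - C (t 1 : ℝ) * X 1 * P 0) := by
    apply qh_sub
    · exact qh_congr (qh_mul (qh_Cmul _ (qh_X 0)) (hP 1)) (by omega)
    · exact qh_congr (qh_mul (qh_Cmul _ (qh_X 1)) (hP 0)) (by omega)
  obtain ⟨⟨g₀, l⟩, ⟨hg₀Δ, hlQH, hdec⟩, huniq⟩ := hΔcompl _ hPwQH
  dsimp only at hg₀Δ hlQH hdec
  set g : MvPolynomial (Fin 2) ℝ := C (((k + t 0 + t 1 : ℕ) : ℝ))⁻¹ * g₀ with hgdef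
  set lam : MvPolynomial (Fin 2) ℝ := C (((r + t 0 + t 1 : ℕ) : ℝ))⁻¹ * l with hlamdef
  have hgΔ : g ∈ Δ := by rw [hgdef, ← smul_eq_C_mul]; exact Δ.smul_mem _ hg₀Δ
  have hgQH : IsQH t (k + t 0 + t 1) g := hΔQH g hgΔ
  have whg : IsWeightedHomogeneous t g (k + t 0 + t 1) := wh_of_qh hgQH
  have e_g := euler_s11 whg
  have hlamQH : IsQH t (k - r) lam := qh_Cmul _ hlQH
  have whlam : IsWeightedHomogeneous t lam (k - r) := wh_of_qh hlamQH
  set Q₀ : MvPolynomial (Fin 2) ℝ := P 0 + pderiv 1 g + lam * pderiv 1 𝔥 with hQ0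
  set Q₁ : MvPolynomial (Fin 2) ℝ := P 1 - pderiv 0 g - lam * pderiv 0 𝔥 with hQ1
  have whQ0 : IsWeightedHomogeneous t Q₀ (k + t 0) := by
    rw [hQ0]
    exact ((wh_of_qh (hP 0)).add (wh_pderiv 1 whg)).add
      (wh_congr (whlam.mul (wh_pderiv 1 wh𝔥)) (show k - r + (r + t 0) = k + t 0 by omega))
  have whQ1 : IsWeightedHomogeneous t Q₁ (k + t 1) := by
    rw [hQ1]
    exact wh_sub (wh_sub (wh_of_qh (hP 1)) (wh_pderiv 0 (wh_congr whg (by omega))))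
      (wh_congr (whlam.mul (wh_pderiv 0 (wh_congr wh𝔥 (show r + t 0 + t 1 = r + t 1 + t 0 by omega))))
        (show k - r + (r + t 1) = k + t 1 by omega))
  have hWQ : C (t 0 : ℝ) * X 0 * Q₁ - C (t 1 : ℝ) * X 1 * Q₀ = 0 := by
    linear_combination (C (t 0 : ℝ) * X 0) * hQ1 - (C (t 1 : ℝ) * X 1) * hQ0 + hdec - e_g
      - lam * e_h - C ((k + t 0 + t 1 : ℕ) : ℝ) * hgdef - g₀ * c1
      - C ((r + t 0 + t 1 : ℕ) : ℝ) * 𝔥 * hlamdef - (l * 𝔥) * c2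
  have k0 := key0 t k Q₀ Q₁ whQ0
  have k1 := key1 t k Q₀ Q₁ whQ1
  rw [hWQ] at k0 k1
  simp only [map_zero, neg_zero, zero_add] at k0 k1
  set μ : MvPolynomial (Fin 2) ℝ :=
    C (((k + t 0 + t 1 : ℕ) : ℝ))⁻¹ * (pderiv 0 Q₀ + pderiv 1 Q₁) with hμdef
  have hμQH : IsQH t k μ := by
    apply qh_of_wh
    rw [hμdef]
    exact wh_congr ((isWeightedHomogeneous_C t _).mul
      ((wh_pderiv 0 whQ0).add (wh_pderiv 1 whQ1))) (zero_add k)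
  have hμ0 : Q₀ = μ * (C (t 0 : ℝ) * X 0) := by
    linear_combination C (((k + t 0 + t 1 : ℕ) : ℝ))⁻¹ * k0
      - (C (t 0 : ℝ) * X 0) * hμdef - Q₀ * c1
  have hμ1 : Q₁ = μ * (C (t 1 : ℝ) * X 1) := by
    linear_combination C (((k + t 0 + t 1 : ℕ) : ℝ))⁻¹ * k1
      - (C (t 1 : ℝ) * X 1) * hμdef - Q₁ * c1
  have hour0 : P 0 = ham g 0 + μ * D0 t 0 + lam * ham 𝔥 0 := by
    simp only [ham, D0, Matrix.cons_val_zero]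
    linear_combination hμ0 - hQ0
  have hour1 : P 1 = ham g 1 + μ * D0 t 1 + lam * ham 𝔥 1 := by
    simp only [ham, D0, Matrix.cons_val_one, Matrix.head_cons, Matrix.cons_val_zero]
    linear_combination hμ1 - hQ1
  have hour : ∀ j, P j = ham g j + μ * D0 t j + lam * ham 𝔥 j := by
    intro j
    fin_cases j
    exacts [hour0, hour1]
  refine ⟨⟨g, μ, lam⟩, ⟨hgΔ, hμQH, hlamQH, hour⟩, ?_⟩
  rintro ⟨g', μ', lam'⟩ ⟨hg'Δ, hμ'QH, hlam'QH, heq⟩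
  have E0 := (heq 0).symm.trans hour0
  have E1 := (heq 1).symm.trans hour1
  simp only [ham, D0, Matrix.cons_val_zero, Matrix.cons_val_one, Matrix.head_cons] at E0 E1
  have hGΔ : g' - g ∈ Δ := Δ.sub_mem hg'Δ hgΔ
  have whG : IsWeightedHomogeneous t (g' - g) (k + t 0 + t 1) := wh_of_qh (hΔQH _ hGΔ)
  have e_G := euler_s11 whG
  simp only [map_sub] at e_G
  have hLQH : IsQH t (k - r) (lam' - lam) := qh_sub hlam'QH hlamQH
  have claim : C ((k + t 0 + t 1 : ℕ) : ℝ) * (g' - g)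
      + C ((r + t 0 + t 1 : ℕ) : ℝ) * ((lam' - lam) * 𝔥) = 0 := by
    linear_combination (C (t 0 : ℝ) * X 0) * E1 - (C (t 1 : ℝ) * X 1) * E0 - e_G
      - (lam' - lam) * e_h
  obtain ⟨w, hw, hwu⟩ := hΔcompl 0 qh_zero
  have h1 := hwu (C ((k + t 0 + t 1 : ℕ) : ℝ) * (g' - g),
      C ((r + t 0 + t 1 : ℕ) : ℝ) * (lam' - lam))
    ⟨by rw [← smul_eq_C_mul]; exact Δ.smul_mem _ hGΔ, qh_Cmul _ hLQH,
      by linear_combination -claim⟩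
  have h2 := hwu (0, 0) ⟨Δ.zero_mem, qh_zero, by rw [zero_mul, add_zero]⟩
  have h3 := h1.trans h2.symm
  have hfst := congrArg Prod.fst h3
  have hsnd := congrArg Prod.snd h3
  dsimp only at hfst hsnd
  have hgg : g' = g := by
    have : g' - g = C (((k + t 0 + t 1 : ℕ) : ℝ))⁻¹
        * (C ((k + t 0 + t 1 : ℕ) : ℝ) * (g' - g)) := by
      rw [← mul_assoc, ← C_mul, inv_mul_cancel₀ hks, C_1, one_mul]
    rw [hfst, mul_zero] at this
    exact sub_eq_zero.mp this
  have hll : lam' = lam := by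
    have : lam' - lam = C (((r + t 0 + t 1 : ℕ) : ℝ))⁻¹
        * (C ((r + t 0 + t 1 : ℕ) : ℝ) * (lam' - lam)) := by
      rw [← mul_assoc, ← C_mul, inv_mul_cancel₀ hrs, C_1, one_mul]
    rw [hsnd, mul_zero] at this
    exact sub_eq_zero.mp this
  have hμμ : μ' = μ := by
    rw [hgg, hll] at E0
    have hcancel : μ' * (C (t 0 : ℝ) * X 0) = μ * (C (t 0 : ℝ) * X 0) := by
      linear_combination E0
    have hne : (C (t 0 : ℝ) * X 0 : MvPolynomial (Fin 2) ℝ) ≠ 0 := by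
      apply mul_ne_zero _ (X_ne_zero 0)
      simpa using (ht 0).ne'
    exact mul_right_cancel₀ hne hcancel
  simp only [Prod.mk.injEq]
  exact ⟨hgg, hμμ, hll⟩
end
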